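/- In ASLD resolution, no atom is popped prematurely: in any reachable state ⟨G ∥ AS⟩, reading G left to right, the prefix of G before the first ↑ mark contains only atoms whose parent (if any) is the top of AS, and every element of AS at depth d from the top corresponds to the segment of G between the d-th and (d+1)-th ↑ marks, i.e., the stack elements from top to bottom are the parents of the successive ↑-delimited segments of the goal. -/

import Mathlib

/-! Basic syntax of definite logic programs: first-order terms, atoms,
substitutions, most general unifiers and clauses. -/

abbrev Var := ℕ

inductive Tm : Type
  | var : Var → Tm
  | fn : ℕ → List Tm → Tm

abbrev Subst := Var → Tm

def Tm.subst (σ : Subst) : Tm → Tm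
  | .var v => σ v
  | .fn f ts => .fn f (ts.attach.map fun t => Tm.subst σ t.1)
decreasing_by simp only [Tm.fn.sizeOf_spec]; have := List.sizeOf_lt_of_mem t.2; omega

structure Atom where
  pred : ℕ
  args : List Tm

def Atom.subst (σ : Subst) (A : Atom) : Atom := ⟨A.pred, A.args.map (Tm.subst σ)⟩

/-- The identity substitution. -/
def idS : Subst := Tm.var

/-- Composition of substitutions: `(σ.comp τ) t = τ(σ(t))`. -/
def Subst.comp (σ τ : Subst) : Subst := fun v => Tm.subst τ (σ v)

def Unifies (θ : Subst) (A B : Atom) : Prop := A.subst θ = B.subst θ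

/-- `θ` is a most general unifier of atoms `A` and `B`. -/
def IsMgu (θ : Subst) (A B : Atom) : Prop :=
  Unifies θ A B ∧ ∀ τ, Unifies τ A B → ∃ δ, ∀ v, τ v = Tm.subst δ (θ v)

structure Clause where
  head : Atom
  body : List Atom

/-! ASLD resolution: goals are lists of items, where an item is either the
pop-mark `↑` or an atom annotated (as ghost information) with the list of its
ancestors, nearest ancestor first; ancestors are recorded in the instantiation
state they had when they were selected.  A state pairs a goal with the
ancestor stack (head = top of the stack). -/

inductive GItem : Type
  | pop : GItem
  | atom : Atom → List Atom → GItem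

def GItem.isPop : GItem → Bool
  | .pop => true
  | _ => false

/-- Apply a substitution to the atom of an item (annotations, which are
snapshots, are left untouched). -/
def instG (θ : Subst) : GItem → GItem
  | .pop => .pop
  | .atom A anc => .atom (A.subst θ) anc

structure AState where
  goal : List GItem
  stack : List Atom

/-- `Admissible wqo A AS`: no element of the sequence `AS` is `wqo`-below the
new atom `A`. -/
def Admissible (wqo : Atom → Atom → Prop) (A : Atom) (AS : List Atom) : Prop :=
  ∀ B ∈ AS, ¬ wqo B A

/-- ASLD resolution steps.  **derive** selects (via an arbitrary computation
rule) an atom `A` of the goal, provided the leftmost item of the goal is not a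
`↑` mark and `A` is admissible w.r.t. the contents of the ancestor stack;
it replaces the goal by the instantiated clause body placed at the front,
followed by a `↑` mark and the instantiated remaining atoms, and pushes `A`
onto the stack.  **popDerive** applies when the leftmost item is `↑`: it
removes the mark and pops the stack. -/
inductive AStep (P : List Clause) (wqo : Atom → Atom → Prop) : AState → AState → Prop
  | derive (pre post : List GItem) (A : Atom) (anc : List Atom) (C : Clause)
      (θ : Subst) (AS : List Atom)
      (hC : C ∈ P) (hmgu : IsMgu θ A C.head)
      (hleft : (pre ++ GItem.atom A anc :: post).head? ≠ some GItem.pop)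
      (hadm : Admissible wqo A AS) :
      AStep P wqo ⟨pre ++ GItem.atom A anc :: post, AS⟩
        ⟨(C.body.map fun B => GItem.atom (B.subst θ) (A :: anc)) ++
            GItem.pop :: (pre ++ post).map (instG θ), A :: AS⟩
  | popDerive (G : List GItem) (T : Atom) (AS : List Atom) :
      AStep P wqo ⟨GItem.pop :: G, T :: AS⟩ ⟨G, AS⟩

/-- The initial ASLD state for a query `Q`: all atoms have an empty ancestor
annotation and the stack is empty. -/
def initState (Q : List Atom) : AState :=
  ⟨Q.map fun A => GItem.atom A [], []⟩


@[simp] lemma isPop_pop : GItem.isPop GItem.pop = true := rfl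
@[simp] lemma isPop_atom (A : Atom) (anc : List Atom) :
    (GItem.atom A anc).isPop = false := rfl

section Helpers

lemma splitOnP_no_sep {α} (p : α → Bool) (l : List α) (h : ∀ x ∈ l, p x = false) :
    l.splitOnP p = [l] := by
  induction l with
  | nil => simp [List.splitOnP_nil]
  | cons a t ih =>
    rw [List.splitOnP_cons, h a (by simp), ih (fun x hx => h x (by simp [hx]))]
    rfl

lemma splitOnP_append_sep {α} (p : α → Bool) (l1 l2 : List α) (s : α)
    (h1 : ∀ x ∈ l1, p x = false) (hs : p s = true) :
    (l1 ++ s :: l2).splitOnP p = l1 :: l2.splitOnP p := by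
  induction l1 with
  | nil => simp [List.splitOnP_cons, hs]
  | cons a t ih =>
    rw [List.cons_append, List.splitOnP_cons, h1 a (by simp),
      ih (fun x hx => h1 x (by simp [hx]))]
    rfl

lemma modifyHead_getElem?_succ {α} (f : α → α) (l : List α) (n : ℕ) :
    (l.modifyHead f)[n + 1]? = l[n + 1]? := by
  cases l <;> rfl

lemma splitOnP_map_instG (θ : Subst) (l : List GItem) :
    (l.map (instG θ)).splitOnP GItem.isPop
      = (l.splitOnP GItem.isPop).map (List.map (instG θ)) := by
  induction l with
  | nil => simp [List.splitOnP_nil]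
  | cons a t ih =>
    rw [List.map_cons, List.splitOnP_cons, List.splitOnP_cons, ih]
    have hp : (instG θ a).isPop = a.isPop := by cases a <;> rfl
    rw [hp]
    cases ha : a.isPop
    · simp only [Bool.false_eq_true, if_false]
      cases h : (t.splitOnP GItem.isPop) <;> simp
    · simp

lemma mem_splitOnP_insert {α} (p : α → Bool) (x : α) (hx : p x = false) :
    ∀ (l1 l2 : List α) (d : ℕ) (seg : List α) (y : α),
      ((l1 ++ l2).splitOnP p)[d]? = some seg → y ∈ seg →
      ∃ seg', ((l1 ++ x :: l2).splitOnP p)[d]? = some seg' ∧ y ∈ seg' := by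
  intro l1
  induction l1 with
  | nil =>
    intro l2 d seg y hseg hy
    simp only [List.nil_append] at hseg ⊢
    rw [List.splitOnP_cons, hx]
    simp only [Bool.false_eq_true, if_false]
    cases d with
    | zero =>
      cases hL : l2.splitOnP p with
      | nil => exact absurd hL (List.splitOnP_ne_nil _ _)
      | cons h t =>
        rw [hL] at hseg
        simp only [List.getElem?_cons_zero, Option.some.injEq] at hseg
        subst hseg
        exact ⟨x :: h, by simp [hL], by simp [hy]⟩
    | succ n =>
      rw [modifyHead_getElem?_succ]
      exact ⟨seg, hseg, hy⟩
  | cons a t ih =>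
    intro l2 d seg y hseg hy
    rw [List.cons_append] at hseg ⊢
    rw [List.splitOnP_cons] at hseg ⊢
    cases ha : p a
    · simp only [ha, Bool.false_eq_true, if_false] at hseg ⊢
      cases d with
      | zero =>
        cases hL : (t ++ l2).splitOnP p with
        | nil => exact absurd hL (List.splitOnP_ne_nil _ _)
        | cons h rest =>
          rw [hL] at hseg
          simp only [List.modifyHead, List.getElem?_cons_zero, Option.some.injEq] at hseg
          subst hseg
          cases hL' : (t ++ x :: l2).splitOnP p with
          | nil => exact absurd hL' (List.splitOnP_ne_nil _ _)
          | cons h' rest' =>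
            rcases List.mem_cons.mp hy with rfl | hy'
            · exact ⟨y :: h', by simp [hL'], by simp⟩
            · obtain ⟨seg', hseg', hmem⟩ := ih l2 0 h y (by simp [hL]) hy'
              rw [hL'] at hseg'
              simp only [List.getElem?_cons_zero, Option.some.injEq] at hseg'
              exact ⟨a :: h', by simp [hL'],
                by rw [hseg']; exact List.mem_cons_of_mem a hmem⟩
      | succ n =>
        rw [modifyHead_getElem?_succ] at hseg
        obtain ⟨seg', hseg', hmem⟩ := ih l2 (n + 1) seg y hseg hy
        rw [modifyHead_getElem?_succ]
        exact ⟨seg', hseg', hmem⟩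
    · simp only [ha, if_true] at hseg ⊢
      cases d with
      | zero =>
        simp only [List.getElem?_cons_zero, Option.some.injEq] at hseg
        subst hseg; simp at hy
      | succ n =>
        simp only [List.getElem?_cons_succ] at hseg ⊢
        exact ih l2 n seg y hseg hy

end Helpers

/-- In ASLD resolution, no atom is popped prematurely: in any reachable state
`⟨G ∥ AS⟩`, reading `G` left to right and splitting it into the maximal
`↑`-delimited segments of non-`↑` atoms, the stack elements from top to bottom
are the parents of the successive segments.  Formally, for every atom in the
`d`-th segment of the goal, its parent — the first element of its (ghost)
ancestor annotation, if any — is exactly the stack element at depth `d` from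
the top: `anc.head? = AS[d]?`.  In particular the prefix of `G` before the
first `↑` mark contains only atoms whose parent (if any) is the top of `AS`,
and atoms with no parent (`anc.head? = none`) occur only in segments beyond
the stack (`AS[d]? = none`). -/

theorem stack_segments (P : List Clause) (wqo : Atom → Atom → Prop)
    (Q : List Atom) (s : AState)
    (hreach : Relation.ReflTransGen (AStep P wqo) (initState Q) s) :
    ∀ (d : ℕ) (seg : List GItem),
      (s.goal.splitOnP GItem.isPop)[d]? = some seg →
        ∀ (A : Atom) (anc : List Atom), GItem.atom A anc ∈ seg →
          anc.head? = s.stack[d]? := by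
  induction hreach with
  | refl =>
    intro d seg hseg A anc hmem
    have hns : ∀ x ∈ (initState Q).goal, GItem.isPop x = false := by
      intro x hx
      simp only [initState, List.mem_map] at hx
      obtain ⟨a, _, rfl⟩ := hx
      rfl
    rw [splitOnP_no_sep _ _ hns] at hseg
    cases d with
    | zero =>
      simp only [List.getElem?_cons_zero, Option.some.injEq] at hseg
      subst hseg
      simp only [initState, List.mem_map] at hmem
      obtain ⟨a, _, heq⟩ := hmem
      cases heq
      rfl
    | succ n => simp at hseg
  | tail hsteps hstep ih =>
    rename_i s₁ s₂
    cases hstep with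
    | derive pre post A anc C θ AS hC hmgu hleft hadm =>
      intro d seg hseg A' anc' hmem
      simp only at hseg ⊢
      have hbody : ∀ x ∈ C.body.map fun B => GItem.atom (B.subst θ) (A :: anc),
          GItem.isPop x = false := by
        intro x hx
        simp only [List.mem_map] at hx
        obtain ⟨B, _, rfl⟩ := hx
        rfl
      rw [splitOnP_append_sep GItem.isPop _ _ GItem.pop hbody rfl, splitOnP_map_instG] at hseg
      cases d with
      | zero =>
        simp only [List.getElem?_cons_zero, Option.some.injEq] at hseg
        subst hseg
        simp only [List.mem_map] at hmem
        obtain ⟨B, _, heq⟩ := hmem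
        cases heq
        simp
      | succ n =>
        simp only [List.getElem?_cons_succ] at hseg
        rw [List.getElem?_map] at hseg
        cases h0 : ((pre ++ post).splitOnP GItem.isPop)[n]? with
        | none => rw [h0] at hseg; simp at hseg
        | some seg₀ =>
          rw [h0] at hseg
          simp only [Option.map_some, Option.some.injEq] at hseg
          subst hseg
          simp only [List.mem_map] at hmem
          obtain ⟨it, hit, heq⟩ := hmem
          cases it with
          | pop => simp [instG] at heq
          | atom B anc₂ =>
            simp only [instG, GItem.atom.injEq] at heq
            obtain ⟨-, rfl⟩ := heq
            obtain ⟨seg', hseg', hmem'⟩ :=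
              mem_splitOnP_insert GItem.isPop (GItem.atom A anc) rfl pre post n seg₀
                (GItem.atom B anc₂) h0 hit
            simpa using ih n seg' hseg' B anc₂ hmem'
    | popDerive G T AS =>
      intro d seg hseg A anc hmem
      simp only at hseg ⊢
      have hseg' : ((GItem.pop :: G).splitOnP GItem.isPop)[d + 1]? = some seg := by
        rw [List.splitOnP_cons, isPop_pop, if_pos rfl]
        simpa using hseg
      simpa using ih (d + 1) seg hseg' A anc hmem
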